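/- For the lifted TASEP with N particles on L sites, the distance between any two configurations is at least the distance between their collapsed configurations in the periodic SSEP graph; hence the lifted TASEP diameter is at least ⌈N(L−N)/2⌉. -/

import Mathlib

namespace Paper

/-- There is a path of exactly `n` moves of `step` from `x` to `y`. -/
def Reaches {C : Type*} (step : C → C → Prop) (x y : C) (n : ℕ) : Prop :=
  ∃ f : ℕ → C, f 0 = x ∧ f n = y ∧ ∀ i < n, step (f i) (f (i + 1))

/-- Graph distance: minimal number of moves from `x` to `y`. -/
noncomputable def gdist {C : Type*} (step : C → C → Prop) (x y : C) : ℕ :=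
  sInf {n | Reaches step x y n}

section Basic
variable {C : Type*} {step : C → C → Prop} {x y z : C} {m n : ℕ}

lemma reaches_refl (step : C → C → Prop) (x : C) : Reaches step x x 0 :=
  ⟨fun _ => x, rfl, rfl, by omega⟩

lemma reaches_single (h : step x y) : Reaches step x y 1 := by
  refine ⟨fun k => if k = 0 then x else y, by simp, by simp, ?_⟩
  intro i hi
  interval_cases i
  simpa using h

lemma reaches_trans (h1 : Reaches step x y m) (h2 : Reaches step y z n) :
    Reaches step x z (m + n) := by
  obtain ⟨f, hf0, hfm, hf⟩ := h1
  obtain ⟨g, hg0, hgn, hg⟩ := h2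
  refine ⟨fun k => if k < m then f k else g (k - m), ?_, ?_, ?_⟩
  · by_cases h : 0 < m
    · simp [h, hf0]
    · have hm : m = 0 := by omega
      subst hm
      simp only [Nat.lt_irrefl, if_neg, Nat.sub_zero]
      rw [hg0, ← hfm, hf0]
      simp
  · have : ¬ (m + n < m) := by omega
    simp only [this, if_false]
    have : m + n - m = n := by omega
    rw [this, hgn]
  · intro i hi
    by_cases h : i < m
    · by_cases h' : i + 1 < m
      · simpa [h, h'] using hf i h
      · have him : i + 1 = m := by omega
        have heq : g (i + 1 - m) = f (i + 1) := by
          rw [him]; simp [hg0, ← hfm]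
        simp only [if_pos h, if_neg (by omega : ¬ i + 1 < m), heq]
        exact hf i h
    · have h' : ¬ i + 1 < m := by omega
      simp only [if_neg h, if_neg h']
      have : i + 1 - m = (i - m) + 1 := by omega
      rw [this]
      exact hg (i - m) (by omega)

lemma reaches_cons (h : step x y) (h2 : Reaches step y z n) :
    Reaches step x z (n + 1) := by
  have := reaches_trans (reaches_single h) h2
  rwa [Nat.add_comm] at this

lemma reaches_destruct (h : Reaches step x z (n + 1)) :
    ∃ y, step x y ∧ Reaches step y z n := by
  obtain ⟨f, hf0, hfn, hf⟩ := h
  exact ⟨f 1, hf0 ▸ hf 0 (by omega), fun k => f (k + 1), rfl, by simpa using hfn,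
    fun i hi => hf (i + 1) (by omega)⟩

lemma gdist_le {n : ℕ} (h : Reaches step x y n) : gdist step x y ≤ n :=
  Nat.sInf_le h

lemma reaches_splice (hij' : m < n) (hn : n ≤ z') (f : ℕ → C)
    (hf0 : f 0 = x) (hfn : f z' = y) (hf : ∀ i < z', step (f i) (f (i + 1)))
    (hfij : f m = f n) : Reaches step x y (z' - (n - m)) := by
  set d := n - m with hd
  have hd0 : 0 < d := by omega
  refine ⟨fun k => if k < m then f k else f (k + d), ?_, ?_, ?_⟩
  · by_cases h : 0 < m
    · simp [h, hf0]
    · have hm : m = 0 := by omega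
      simp only [if_neg (by omega : ¬ (0:ℕ) < m)]
      have h0 : (0:ℕ) + d = n := by omega
      rw [h0, ← hfij, hm, hf0]
  · have h1 : ¬ (z' - d < m) := by omega
    simp only [h1, if_false]
    have : z' - d + d = z' := by omega
    rw [this, hfn]
  · intro k hk
    by_cases h : k < m
    · by_cases h' : k + 1 < m
      · simpa [h, h'] using hf k (by omega)
      · have hk1 : k + 1 = m := by omega
        have heq : f (k + 1 + d) = f (k + 1) := by
          rw [hk1]
          have : m + d = n := by omega
          rw [this, ← hfij]
        simp only [if_pos h, if_neg (by omega : ¬ k + 1 < m), heq]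
        exact hf k (by omega)
    · have h' : ¬ k + 1 < m := by omega
      simp only [if_neg h, if_neg h']
      have : k + 1 + d = (k + d) + 1 := by omega
      rw [this]
      exact hf (k + d) (by omega)

lemma gdist_le_card [Fintype C] (step : C → C → Prop) (x y : C) :
    gdist step x y ≤ Fintype.card C := by
  by_cases hne : {n | Reaches step x y n}.Nonempty
  · set n₀ := gdist step x y with hn₀
    have hmem : Reaches step x y n₀ := Nat.sInf_mem hne
    by_contra hlt
    push_neg at hlt
    obtain ⟨f, hf0, hfn, hf⟩ := hmem
    have hcard : Fintype.card C < Fintype.card (Fin (n₀ + 1)) := by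
      simp; omega
    obtain ⟨i, j, hij, hfij⟩ := Fintype.exists_ne_map_eq_of_card_lt
      (fun k : Fin (n₀ + 1) => f k.1) hcard
    have hijne : (i : ℕ) ≠ (j : ℕ) := fun h => hij (Fin.ext h)
    have key : ∀ a b : ℕ, a < b → b ≤ n₀ → f a = f b → False := by
      intro a b hab hbn hfab
      have hshort := reaches_splice hab hbn f hf0 hfn hf hfab
      have : n₀ ≤ n₀ - (b - a) :=
        Nat.sInf_le (Set.mem_setOf_eq ▸ hshort)
      omega
    rcases Nat.lt_or_ge (i : ℕ) (j : ℕ) with h | h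
    · exact key i j h (by omega) hfij
    · exact key j i (by omega) (by omega) hfij.symm
  · rw [Set.not_nonempty_iff_eq_empty] at hne
    rw [gdist, hne, Nat.sInf_empty]
    exact Nat.zero_le _

end Basic

end Paper
namespace Paper

/-- A periodic SSEP move on `N`-subsets of `ℤ/Lℤ`: one particle hops to an
adjacent empty site (mod `L`). -/
def StepPer (L N : ℕ) (x y : Finset (ZMod L)) : Prop :=
  x.card = N ∧ ∃ p ∈ x, ∃ q : ZMod L, (q = p + 1 ∨ q = p - 1) ∧ q ∉ x ∧
    y = insert q (x.erase p)

/-- Intermediate state of a lifted-TASEP move: the active particle at `c.2`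
advances deterministically if unblocked, otherwise the activity passes to the
blocking particle. -/
def Inter {L : ℕ} (c : Finset (ZMod L) × ZMod L) : Finset (ZMod L) × ZMod L :=
  if c.2 + 1 ∈ c.1 then (c.1, c.2 + 1) else (insert (c.2 + 1) (c.1.erase c.2), c.2 + 1)

/-- `r` is the particle of `s` immediately preceding position `q` (cyclically). -/
def IsPred {L : ℕ} (s : Finset (ZMod L)) (q r : ZMod L) : Prop :=
  ∃ k : ℕ, 0 < k ∧ r = q - (k : ZMod L) ∧ r ∈ s ∧
    ∀ j : ℕ, 0 < j → j < k → q - (j : ZMod L) ∉ s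

/-- A lifted-TASEP move: deterministic advance, then either a forward move
(no further action) or a pullback move (activity to the preceding particle). -/
def LStep {L : ℕ} (c d : Finset (ZMod L) × ZMod L) : Prop :=
  c.2 ∈ c.1 ∧ (d = Inter c ∨ (d.1 = (Inter c).1 ∧ IsPred (Inter c).1 (Inter c).2 d.2))

/-- Diameter of the lifted TASEP with `N` particles on `L` sites. -/
noncomputable def diamLifted (L N : ℕ) : ℕ :=
  sSup {n | ∃ x y : Finset (ZMod L) × ZMod L,
    x.1.card = N ∧ x.2 ∈ x.1 ∧ y.1.card = N ∧ y.2 ∈ y.1 ∧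
    n = gdist (LStep (L := L)) x y}

section Lifted
variable {L : ℕ}

lemma inter_valid {c : Finset (ZMod L) × ZMod L} (hc : c.2 ∈ c.1) :
    (Inter c).2 ∈ (Inter c).1 := by
  unfold Inter; split_ifs with h
  · exact h
  · exact Finset.mem_insert_self _ _

lemma inter_card {c : Finset (ZMod L) × ZMod L} (hc : c.2 ∈ c.1) :
    (Inter c).1.card = c.1.card := by
  unfold Inter; split_ifs with h
  · rfl
  · simp only
    rw [Finset.card_insert_of_notMem (fun hmem => h (Finset.mem_of_mem_erase hmem)),
      Finset.card_erase_of_mem hc]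
    have : 0 < c.1.card := Finset.card_pos.2 ⟨c.2, hc⟩
    omega

lemma lstep_inter {c : Finset (ZMod L) × ZMod L} (hc : c.2 ∈ c.1) : LStep c (Inter c) :=
  ⟨hc, Or.inl rfl⟩

lemma lstep_valid_right {c d : Finset (ZMod L) × ZMod L} (h : LStep c d) : d.2 ∈ d.1 := by
  rcases h.2 with h' | ⟨h1, k, hk0, hr, hrmem, hmin⟩
  · rw [h']; exact inter_valid h.1
  · rw [h1]; exact hrmem

lemma lstep_fst {c d : Finset (ZMod L) × ZMod L} (h : LStep c d) : d.1 = (Inter c).1 := by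
  rcases h.2 with h' | ⟨h1, _⟩
  · rw [h']
  · exact h1

lemma lstep_card {c d : Finset (ZMod L) × ZMod L} (h : LStep c d) :
    d.1.card = c.1.card := by
  rw [lstep_fst h]; exact inter_card h.1

lemma inter_recover (hL2 : 2 ≤ L) {c : Finset (ZMod L) × ZMod L} (hc : c.2 ∈ c.1) :
    (if (Inter c).2 - 1 ∈ (Inter c).1 then ((Inter c).1, (Inter c).2 - 1)
     else (insert ((Inter c).2 - 1) ((Inter c).1.erase (Inter c).2), (Inter c).2 - 1)) = c := by
  haveI : Fact (1 < L) := ⟨hL2⟩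
  have hne : (c.2 : ZMod L) ≠ c.2 + 1 := by
    intro h
    exact one_ne_zero (left_eq_add.mp h)
  by_cases hb : c.2 + 1 ∈ c.1
  · have hI : Inter c = (c.1, c.2 + 1) := by simp [Inter, hb]
    rw [hI]
    simp only [add_sub_cancel_right]
    rw [if_pos hc]
  · have hI : Inter c = (insert (c.2 + 1) (c.1.erase c.2), c.2 + 1) := by simp [Inter, hb]
    rw [hI]
    simp only [add_sub_cancel_right]
    have hnotmem : c.2 ∉ insert (c.2 + 1) (c.1.erase c.2) := by
      simp only [Finset.mem_insert, Finset.mem_erase]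
      push_neg
      exact ⟨hne, fun h _ => (h rfl).elim⟩
    rw [if_neg hnotmem]
    have h1 : c.2 + 1 ∉ c.1.erase c.2 := fun h => hb (Finset.mem_of_mem_erase h)
    rw [Finset.erase_insert h1, Finset.insert_erase hc]

lemma inter_injective (hL2 : 2 ≤ L) {c c' : Finset (ZMod L) × ZMod L}
    (hc : c.2 ∈ c.1) (hc' : c'.2 ∈ c'.1) (h : Inter c = Inter c') : c = c' := by
  rw [← inter_recover hL2 hc, ← inter_recover hL2 hc', h]

def Valid (L : ℕ) := {c : Finset (ZMod L) × ZMod L // c.2 ∈ c.1}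

def FV : Valid L → Valid L := fun v => ⟨Inter v.1, inter_valid v.2⟩

lemma fv_injective (hL2 : 2 ≤ L) : Function.Injective (FV (L := L)) := fun a b h =>
  Subtype.ext (inter_injective hL2 a.2 b.2 (congrArg Subtype.val h))

lemma fv_periodic (hL2 : 2 ≤ L) (v : Valid L) :
    ∃ m, 0 < m ∧ (FV (L := L))^[m] v = v := by
  haveI : NeZero L := ⟨by omega⟩
  haveI : Finite (Valid L) := by unfold Valid; infer_instance
  obtain ⟨i, j, hij, hfij⟩ :=
    Finite.exists_ne_map_eq_of_infinite (fun n : ℕ => (FV (L := L))^[n] v)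
  rcases Nat.lt_or_ge i j with h | h
  · refine ⟨j - i, by omega, ?_⟩
    have : (FV (L := L))^[i] ((FV (L := L))^[j-i] v) = (FV (L := L))^[i] v := by
      rw [← Function.iterate_add_apply]
      have : i + (j - i) = j := by omega
      rw [this]; exact hfij.symm
    exact ((fv_injective hL2).iterate i) this
  · have hij' : j < i := by omega
    refine ⟨i - j, by omega, ?_⟩
    have : (FV (L := L))^[j] ((FV (L := L))^[i-j] v) = (FV (L := L))^[j] v := by
      rw [← Function.iterate_add_apply]
      have : j + (i - j) = i := by omega
      rw [this]; exact hfij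
    exact ((fv_injective hL2).iterate j) this

end Lifted

section Pred
variable {L : ℕ} [NeZero L]

lemma exists_pred_k (s : Finset (ZMod L)) (q : ZMod L) (hq : q ∈ s) :
    ∃ k : ℕ, 0 < k ∧ q - (k : ZMod L) ∈ s :=
  ⟨L, NeZero.pos L, by simpa using hq⟩

noncomputable def predK (s : Finset (ZMod L)) (q : ZMod L) (hq : q ∈ s) : ℕ :=
  Nat.find (exists_pred_k s q hq)

lemma predK_pos (s : Finset (ZMod L)) (q : ZMod L) (hq : q ∈ s) : 0 < predK s q hq :=
  (Nat.find_spec (exists_pred_k s q hq)).1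

lemma predK_mem (s : Finset (ZMod L)) (q : ZMod L) (hq : q ∈ s) :
    q - (predK s q hq : ZMod L) ∈ s :=
  (Nat.find_spec (exists_pred_k s q hq)).2

lemma predK_le (s : Finset (ZMod L)) (q : ZMod L) (hq : q ∈ s) {k : ℕ}
    (hk : 0 < k) (hmem : q - (k : ZMod L) ∈ s) : predK s q hq ≤ k :=
  Nat.find_min' _ ⟨hk, hmem⟩

lemma predK_isPred (s : Finset (ZMod L)) (q : ZMod L) (hq : q ∈ s) :
    IsPred s q (q - (predK s q hq : ZMod L)) :=
  ⟨predK s q hq, predK_pos s q hq, rfl, predK_mem s q hq, fun j hj0 hjk hmem =>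
    Nat.find_min (exists_pred_k s q hq) hjk ⟨hj0, hmem⟩⟩

end Pred

end Paper
namespace Paper

section Rch
variable {L : ℕ}

def Rch {L : ℕ} (c d : Finset (ZMod L) × ZMod L) : Prop :=
  ∃ n, Reaches (LStep (L := L)) c d n

lemma rch_refl (c : Finset (ZMod L) × ZMod L) : Rch c c := ⟨0, reaches_refl _ _⟩

lemma rch_trans {c d e : Finset (ZMod L) × ZMod L} (h1 : Rch c d) (h2 : Rch d e) :
    Rch c e := by
  obtain ⟨m, hm⟩ := h1; obtain ⟨n, hn⟩ := h2
  exact ⟨m + n, reaches_trans hm hn⟩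

lemma rch_of_step {c d : Finset (ZMod L) × ZMod L} (h : LStep c d) : Rch c d :=
  ⟨1, reaches_single h⟩

lemma rch_iterate (v : Valid L) (n : ℕ) : Rch v.1 ((FV (L := L))^[n] v).1 := by
  induction n with
  | zero => exact rch_refl _
  | succ n ih =>
    rw [Function.iterate_succ_apply']
    exact rch_trans ih (rch_of_step (lstep_inter ((FV (L := L))^[n] v).2))

lemma rch_inter_rev (hL2 : 2 ≤ L) {c : Finset (ZMod L) × ZMod L} (hc : c.2 ∈ c.1) :
    Rch (Inter c) c := by
  obtain ⟨m, hm0, hm⟩ := fv_periodic hL2 ⟨c, hc⟩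
  have h1 : Rch (FV (L := L) ⟨c, hc⟩).1 ((FV (L := L))^[m - 1] (FV (L := L) ⟨c, hc⟩)).1 :=
    rch_iterate _ _
  have h2 : (FV (L := L))^[m - 1] (FV (L := L) ⟨c, hc⟩) = ⟨c, hc⟩ := by
    have h3 := (Function.iterate_succ_apply (FV (L := L)) (m - 1) ⟨c, hc⟩).symm
    rw [h3]
    have h4 : (m - 1).succ = m := by omega
    rw [h4]; exact hm
  rw [h2] at h1
  exact h1

end Rch

section Val
variable {L : ℕ} [NeZero L]

lemma cast_val (x : ZMod L) : ((x.val : ℕ) : ZMod L) = x :=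
  ZMod.natCast_rightInverse x

lemma val_sub' (x y : ZMod L) :
    (x - y).val = if y.val ≤ x.val then x.val - y.val else x.val + L - y.val := by
  have hL : 0 < L := NeZero.pos L
  have hx := ZMod.val_lt x
  have hy := ZMod.val_lt y
  split_ifs with h
  · have hxy : x - y = ((x.val - y.val : ℕ) : ZMod L) := by
      rw [Nat.cast_sub h, cast_val, cast_val]
    rw [hxy, ZMod.val_cast_of_lt (by omega)]
  · have hxy : x - y = ((x.val + L - y.val : ℕ) : ZMod L) := by
      rw [Nat.cast_sub (by omega), Nat.cast_add, cast_val, cast_val, ZMod.natCast_self,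
        add_zero]
    rw [hxy, ZMod.val_cast_of_lt (by omega)]

lemma val_sub_natCast {x : ZMod L} {k : ℕ} (hk : k ≤ x.val) :
    (x - (k : ZMod L)).val = x.val - k := by
  have hkL : k < L := lt_of_le_of_lt hk (ZMod.val_lt x)
  rw [val_sub', ZMod.val_cast_of_lt hkL, if_pos hk]

lemma rch_pred (hL2 : 2 ≤ L) {s : Finset (ZMod L)} {q : ZMod L} (hq : q ∈ s) :
    Rch (s, q) (s, q - (predK s q hq : ZMod L)) := by
  obtain ⟨m, hm0, hm⟩ := fv_periodic hL2 ⟨(s, q), hq⟩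
  set v' := (FV (L := L))^[m - 1] ⟨(s, q), hq⟩ with hv'
  have hIv : FV (L := L) v' = ⟨(s, q), hq⟩ := by
    rw [hv']
    have h3 := (Function.iterate_succ_apply' (FV (L := L)) (m - 1) ⟨(s, q), hq⟩).symm
    rw [h3]
    have h4 : (m - 1).succ = m := by omega
    rw [h4]; exact hm
  have hint : Inter v'.1 = (s, q) := congrArg Subtype.val hIv
  have hstep : LStep v'.1 (s, q - (predK s q hq : ZMod L)) := by
    refine ⟨v'.2, Or.inr ⟨?_, ?_⟩⟩
    · rw [hint]
    · rw [hint]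
      exact predK_isPred s q hq
  exact rch_trans (rch_iterate ⟨(s, q), hq⟩ (m - 1)) (rch_of_step hstep)

lemma rch_pointer_aux (hL2 : 2 ≤ L) {s : Finset (ZMod L)} :
    ∀ (d : ℕ) {q r : ZMod L}, q ∈ s → r ∈ s → (q - r).val = d → Rch (s, q) (s, r) := by
  intro d
  induction d using Nat.strong_induction_on with
  | _ d ih =>
    intro q r hq hr hd
    by_cases hqr : q = r
    · rw [hqr]; exact rch_refl _
    · have hd0 : 0 < d := by
        rcases Nat.eq_zero_or_pos d with h0 | h; swap; exact h
        exfalso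
        apply hqr
        have : q - r = 0 := by
          rw [← ZMod.val_eq_zero]; omega
        linear_combination this
      set k := predK s q hq with hk
      have hkpos : 0 < k := predK_pos s q hq
      have hkle : k ≤ d := by
        apply predK_le s q hq hd0
        have : ((d : ℕ) : ZMod L) = q - r := by rw [← hd, cast_val]
        rw [this]
        simpa using hr
      set q' := q - (k : ZMod L) with hq'
      have hq'mem : q' ∈ s := predK_mem s q hq
      have hq'r : (q' - r).val = d - k := by
        have h1 : q' - r = (q - r) - (k : ZMod L) := by rw [hq']; ring
        rw [h1, val_sub_natCast (by omega : k ≤ (q - r).val)]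
        omega
      exact rch_trans (rch_pred hL2 hq) (ih (d - k) (by omega) hq'mem hr hq'r)

lemma rch_pointer (hL2 : 2 ≤ L) {s : Finset (ZMod L)} {q r : ZMod L}
    (hq : q ∈ s) (hr : r ∈ s) : Rch (s, q) (s, r) :=
  rch_pointer_aux hL2 _ hq hr rfl

end Val

end Paper
namespace Paper

section Compact
variable {L : ℕ} [NeZero L]

def blk (N : ℕ) (t : ZMod L) : Finset (ZMod L) :=
  (Finset.range N).image (fun j => t - (j : ℕ))

noncomputable def msr (t : ZMod L) (s : Finset (ZMod L)) : ℕ :=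
  ∑ p ∈ s, (t - p).val

lemma mover_exists {s : Finset (ZMod L)} {t : ZMod L} (hne : s ≠ blk s.card t) :
    ∃ p ∈ s, p ≠ t ∧ p + 1 ∉ s := by
  by_contra hno
  push_neg at hno
  apply hne
  set J := s.image (fun p => (t - p).val) with hJ
  have hinj : Set.InjOn (fun p => (t - p).val) s := fun p _ p' _ h =>
    sub_right_inj.mp (ZMod.val_injective L h)
  have hcardJ : J.card = s.card := Finset.card_image_of_injOn hinj
  have hdc : ∀ j ∈ J, 0 < j → j - 1 ∈ J := by
    intro j hj hj0
    rw [hJ, Finset.mem_image] at hj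
    obtain ⟨p, hp, hpj⟩ := hj
    have hpt : p ≠ t := by
      intro h; rw [h] at hpj; simp at hpj; omega
    have hp1 : p + 1 ∈ s := hno p hp hpt
    rw [hJ, Finset.mem_image]
    refine ⟨p + 1, hp1, ?_⟩
    have h1 : t - (p + 1) = (t - p) - ((1 : ℕ) : ZMod L) := by push_cast; ring
    rw [h1, val_sub_natCast (by omega : 1 ≤ (t - p).val), hpj]
  have hlow : ∀ j ∈ J, ∀ i, i ≤ j → i ∈ J := by
    intro j hj i hij
    obtain ⟨k, hk⟩ : ∃ k, i + k = j := ⟨j - i, by omega⟩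
    induction k generalizing j with
    | zero => rwa [show i = j by omega]
    | succ k ih =>
      have hj1 : j - 1 ∈ J := hdc j hj (by omega)
      exact ih (j - 1) hj1 (by omega) (by omega)
  by_cases hN : s.card = 0
  · have hs0 : s = ∅ := Finset.card_eq_zero.mp hN
    subst hs0
    simp [blk]
  · have hJne : J.Nonempty := by
      rw [← Finset.card_pos, hcardJ]; omega
    set Mx := J.max' hJne with hMx
    have hJr : J = Finset.range (Mx + 1) := by
      ext i
      constructor
      · intro hi
        rw [Finset.mem_range]
        have := Finset.le_max' J i hi
        omega
      · intro hi
        rw [Finset.mem_range] at hi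
        exact hlow Mx (J.max'_mem hJne) i (by omega)
    have hMxN : Mx + 1 = s.card := by
      rw [← hcardJ, hJr, Finset.card_range]
    -- now  s ⊆ blk
    have hsub : s ⊆ blk s.card t := by
      intro p hp
      have hpJ : (t - p).val ∈ J := Finset.mem_image_of_mem _ hp
      have hlt : (t - p).val < s.card := by
        rw [hJr, Finset.mem_range] at hpJ; omega
      rw [blk, Finset.mem_image]
      refine ⟨(t - p).val, Finset.mem_range.mpr hlt, ?_⟩
      rw [cast_val]
      ring
    refine Finset.eq_of_subset_of_card_le hsub ?_
    calc (blk s.card t).card ≤ s.card := by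
          rw [blk]
          exact le_trans (Finset.card_image_le) (by rw [Finset.card_range])

lemma single_le_msr {s : Finset (ZMod L)} {t p : ZMod L} (hp : p ∈ s) :
    (t - p).val ≤ msr t s :=
  Finset.single_le_sum (f := fun p => (t - p).val) (fun _ _ => Nat.zero_le _) hp

lemma rch_compact (hL2 : 2 ≤ L) (t : ZMod L) :
    ∀ (M : ℕ) (s : Finset (ZMod L)) (p : ZMod L), p ∈ s → msr t s ≤ M →
      ∃ p', p' ∈ blk s.card t ∧ Rch (s, p) (blk s.card t, p') := by
  intro M
  induction M with
  | zero =>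
    intro s p hp hmsr
    have heq : s = blk s.card t := by
      by_contra hne
      obtain ⟨p₀, hp₀, hpt, _⟩ := mover_exists hne
      have h1 := single_le_msr (t := t) hp₀
      have h2 : (t - p₀).val = 0 := by omega
      apply hpt
      have : t - p₀ = 0 := by rw [← ZMod.val_eq_zero]; omega
      linear_combination -this
    exact ⟨p, heq ▸ hp, heq ▸ rch_refl _⟩
  | succ M ih =>
    intro s p hp hmsr
    by_cases heq : s = blk s.card t
    · exact ⟨p, heq ▸ hp, heq ▸ rch_refl _⟩
    · obtain ⟨p₀, hp₀, hpt, hfree⟩ := mover_exists heq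
      set s₁ := insert (p₀ + 1) (s.erase p₀) with hs₁
      have hI : Inter (s, p₀) = (s₁, p₀ + 1) := by simp [Inter, hfree, hs₁]
      have hstep : LStep (s, p₀) (s₁, p₀ + 1) := by
        have := lstep_inter (c := (s, p₀)) hp₀
        rwa [hI] at this
      have hcard : s₁.card = s.card := by
        have := inter_card (c := (s, p₀)) hp₀
        rwa [hI] at this
      have hval : (t - (p₀ + 1)).val = (t - p₀).val - 1 := by
        have h1 : t - (p₀ + 1) = (t - p₀) - ((1 : ℕ) : ZMod L) := by push_cast; ring
        have hpos : 0 < (t - p₀).val := by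
          rcases Nat.eq_zero_or_pos (t - p₀).val with h0 | h; swap; exact h
          exfalso; apply hpt
          have : t - p₀ = 0 := by rw [← ZMod.val_eq_zero]; omega
          linear_combination -this
        rw [h1, val_sub_natCast (by omega : 1 ≤ (t - p₀).val)]
      have hmem1 : p₀ + 1 ∉ s.erase p₀ := fun h => hfree (Finset.mem_of_mem_erase h)
      have hmsr1 : msr t s₁ < msr t s := by
        have e1 : msr t s₁ = (t - (p₀ + 1)).val + msr t (s.erase p₀) := by
          rw [msr, hs₁, Finset.sum_insert hmem1]; rfl
        have e2 : (t - p₀).val + msr t (s.erase p₀) = msr t s :=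
          Finset.add_sum_erase s (fun p => (t - p).val) hp₀
        have hpos : 0 < (t - p₀).val := by
          rcases Nat.eq_zero_or_pos (t - p₀).val with h0 | h; swap; exact h
          exfalso; apply hpt
          have : t - p₀ = 0 := by rw [← ZMod.val_eq_zero]; omega
          linear_combination -this
        omega
      obtain ⟨p', hp', hrch⟩ := ih s₁ (p₀ + 1) (Finset.mem_insert_self _ _) (by omega)
      rw [hcard] at hp' hrch
      exact ⟨p', hp',
        rch_trans (rch_pointer hL2 hp hp₀) (rch_trans (rch_of_step hstep) hrch)⟩

lemma lstep_rev (hL2 : 2 ≤ L) {c d : Finset (ZMod L) × ZMod L} (h : LStep c d) :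
    Rch d c := by
  rcases h.2 with h' | ⟨h1, hpred⟩
  · rw [h']; exact rch_inter_rev hL2 h.1
  · obtain ⟨k, hk0, hr, hrmem, hmin⟩ := hpred
    have hd2 : d.2 ∈ d.1 := by rw [h1, hr]; exact hr ▸ hrmem
    have hq : (Inter c).2 ∈ d.1 := by rw [h1]; exact inter_valid h.1
    have h2 : Rch (d.1, d.2) (d.1, (Inter c).2) := rch_pointer hL2 hd2 hq
    have h3 : (d.1, (Inter c).2) = Inter c := by
      rw [h1]
    have h4 : (d.1, d.2) = d := rfl
    rw [h4, h3] at h2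
    exact rch_trans h2 (rch_inter_rev hL2 h.1)

lemma rch_rev (hL2 : 2 ≤ L) :
    ∀ (n : ℕ) (c d : Finset (ZMod L) × ZMod L), Reaches (LStep (L := L)) c d n → Rch d c := by
  intro n
  induction n with
  | zero =>
    intro c d h
    obtain ⟨f, hf0, hfn, _⟩ := h
    rw [← hf0, hfn]; exact rch_refl _
  | succ n ih =>
    intro c d h
    obtain ⟨z, hcz, hzd⟩ := reaches_destruct h
    exact rch_trans (ih z d hzd) (lstep_rev hL2 hcz)

lemma rch_all (hL2 : 2 ≤ L) {c d : Finset (ZMod L) × ZMod L}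
    (hc : c.2 ∈ c.1) (hd : d.2 ∈ d.1) (hcard : c.1.card = d.1.card) : Rch c d := by
  obtain ⟨p1, hp1, h1⟩ := rch_compact hL2 0 (msr 0 c.1) c.1 c.2 hc le_rfl
  obtain ⟨p2, hp2, h2⟩ := rch_compact hL2 0 (msr 0 d.1) d.1 d.2 hd le_rfl
  rw [hcard] at hp1 h1
  obtain ⟨n2, hn2⟩ := h2
  have h2' : Rch (blk d.1.card (0 : ZMod L), p2) (d.1, d.2) := rch_rev hL2 n2 _ _ hn2
  have hmid : Rch (blk d.1.card (0 : ZMod L), p1) (blk d.1.card (0 : ZMod L), p2) :=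
    rch_pointer hL2 hp1 hp2
  exact rch_trans h1 (rch_trans hmid h2')

end Compact

end Paper
namespace Paper

section Collapse
variable {L N : ℕ}

lemma collapse :
    ∀ (n : ℕ) (x y : Finset (ZMod L) × ZMod L), x.1.card = N →
      Reaches (LStep (L := L)) x y n → ∃ m ≤ n, Reaches (StepPer L N) x.1 y.1 m := by
  intro n
  induction n with
  | zero =>
    intro x y hx h
    obtain ⟨f, hf0, hfn, _⟩ := h
    refine ⟨0, le_rfl, ?_⟩
    rw [← hf0, hfn]
    exact reaches_refl _ _
  | succ n ih =>
    intro x y hx h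
    obtain ⟨z, hxz, hzy⟩ := reaches_destruct h
    have hzcard : z.1.card = N := by rw [lstep_card hxz, hx]
    obtain ⟨m, hm, hreach⟩ := ih z y hzcard hzy
    by_cases hb : x.2 + 1 ∈ x.1
    · have hz1 : z.1 = x.1 := by rw [lstep_fst hxz]; simp [Inter, hb]
      rw [hz1] at hreach
      exact ⟨m, by omega, hreach⟩
    · have hz1 : z.1 = insert (x.2 + 1) (x.1.erase x.2) := by
        rw [lstep_fst hxz]; simp [Inter, hb]
      have hstep : StepPer L N x.1 z.1 :=
        ⟨hx, x.2, hxz.1, x.2 + 1, Or.inl rfl, hb, hz1⟩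
      exact ⟨m + 1, by omega, reaches_cons hstep hreach⟩

end Collapse

section Phi
variable {L : ℕ} [NeZero L]

def hgt (z : ZMod L) : ℕ := min z.val (L - z.val)

noncomputable def phi (s : Finset (ZMod L)) : ℕ := ∑ p ∈ s, hgt p

lemma hgt_succ (p : ZMod L) : hgt (p + 1) ≤ hgt p + 1 ∧ hgt p ≤ hgt (p + 1) + 1 := by
  have hL : 0 < L := NeZero.pos L
  have hv := ZMod.val_lt p
  have hv1 := ZMod.val_lt (p + 1)
  by_cases hL1 : L = 1
  · subst hL1
    rw [hgt, hgt, Nat.min_def, Nat.min_def]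
    split_ifs <;> omega
  · have h1 : p + 1 = p + ((1 : ℕ) : ZMod L) := by push_cast; rfl
    have hw : (p + 1).val = (p.val + 1 % L) % L := by
      rw [h1, ZMod.val_add, ZMod.val_natCast]
    rw [Nat.mod_eq_of_lt (by omega : 1 < L)] at hw
    have hw' : (p + 1).val = p.val + 1 ∨ (p.val + 1 = L ∧ (p + 1).val = 0) := by
      rcases Nat.lt_or_ge (p.val + 1) L with h | h
      · left; rw [hw, Nat.mod_eq_of_lt h]
      · right
        have : p.val + 1 = L := by omega
        constructor
        · exact this
        · rw [hw, this, Nat.mod_self]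
    rw [hgt, hgt, Nat.min_def, Nat.min_def]
    split_ifs <;> omega

lemma phi_lstep {c d : Finset (ZMod L) × ZMod L} (h : LStep c d) :
    phi d.1 ≤ phi c.1 + 1 ∧ phi c.1 ≤ phi d.1 + 1 := by
  have hfst := lstep_fst h
  by_cases hb : c.2 + 1 ∈ c.1
  · have hI : (Inter c).1 = c.1 := by simp [Inter, hb]
    rw [hfst, hI]; omega
  · have hI : (Inter c).1 = insert (c.2 + 1) (c.1.erase c.2) := by simp [Inter, hb]
    rw [hfst, hI]
    have hnm : c.2 + 1 ∉ c.1.erase c.2 := fun hm => hb (Finset.mem_of_mem_erase hm)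
    have e1 : phi (insert (c.2 + 1) (c.1.erase c.2)) = hgt (c.2 + 1) + phi (c.1.erase c.2) := by
      rw [phi, Finset.sum_insert hnm]; rfl
    have e2 : hgt c.2 + phi (c.1.erase c.2) = phi c.1 := Finset.add_sum_erase _ hgt h.1
    have := hgt_succ c.2
    omega

lemma phi_reaches :
    ∀ (n : ℕ) (x y : Finset (ZMod L) × ZMod L), Reaches (LStep (L := L)) x y n →
      phi y.1 ≤ phi x.1 + n ∧ phi x.1 ≤ phi y.1 + n := by
  intro n
  induction n with
  | zero =>
    intro x y h
    obtain ⟨f, hf0, hfn, _⟩ := h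
    rw [← hf0, hfn]; omega
  | succ n ih =>
    intro x y h
    obtain ⟨z, hxz, hzy⟩ := reaches_destruct h
    have h1 := phi_lstep hxz
    have h2 := ih z y hzy
    omega

end Phi

section Sums

-- closed forms
lemma gauss2 (n : ℕ) : 2 * (∑ j ∈ Finset.range n, j) = n * (n - 1) := by
  rw [mul_comm]
  exact Finset.sum_range_id_mul_two n

lemma sum_rev_sub (n : ℕ) : (∑ j ∈ Finset.range n, (n - j)) = (∑ j ∈ Finset.range n, j) + n := by
  have h := Finset.sum_range_reflect (fun j => n - j) n
  have h2 : (∑ j ∈ Finset.range n, (n - (n - 1 - j))) = ∑ j ∈ Finset.range n, (j + 1) := by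
    apply Finset.sum_congr rfl
    intro j hj
    rw [Finset.mem_range] at hj
    omega
  rw [← h, h2, Finset.sum_add_distrib, Finset.sum_const, Finset.card_range, smul_eq_mul,
    mul_one]

lemma sum_rev_sub_const (m b : ℕ) (hmb : m ≤ b + 1) :
    (∑ j ∈ Finset.range m, (b - j)) = m * (b + 1 - m) + (∑ j ∈ Finset.range m, j) := by
  have h := Finset.sum_range_reflect (fun j => b - j) m
  have h2 : (∑ j ∈ Finset.range m, (b - (m - 1 - j))) = ∑ j ∈ Finset.range m, ((b + 1 - m) + j) := by
    apply Finset.sum_congr rfl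
    intro j hj
    rw [Finset.mem_range] at hj
    omega
  rw [← h, h2, Finset.sum_add_distrib, Finset.sum_const, Finset.card_range, smul_eq_mul]

lemma key_sums {L N a b m' : ℕ} (hN : 0 < N) (hNL : N < L)
    (ha : a = N / 2) (hb : b = L / 2) (hm : m' = N - a) :
    2 * (∑ j ∈ Finset.range N, (if j < a then a - j else j - a)) + N * (L - N) ≤
    2 * (∑ j ∈ Finset.range N, (if j < a then L - b - a + j else b + a - j)) := by
  have hN' : N = a + m' := by omega
  have hm'b : m' ≤ b := by omega
  have hab : a ≤ b := by omega
  have habL : a + b < L := by omega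
  -- split the sums
  rw [hN', Finset.sum_range_add, Finset.sum_range_add]
  have e1 : (∑ j ∈ Finset.range a, (if j < a then a - j else j - a))
      = (∑ j ∈ Finset.range a, j) + a := by
    rw [← sum_rev_sub a]
    apply Finset.sum_congr rfl
    intro j hj; rw [Finset.mem_range] at hj
    rw [if_pos hj]
  have e2 : (∑ j ∈ Finset.range m', (if a + j < a then a - (a + j) else a + j - a))
      = (∑ j ∈ Finset.range m', j) := by
    apply Finset.sum_congr rfl
    intro j hj
    rw [if_neg (by omega)]
    omega
  have e3 : (∑ j ∈ Finset.range a, (if j < a then L - b - a + j else b + a - j))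
      = a * (L - b - a) + (∑ j ∈ Finset.range a, j) := by
    have : ∀ j ∈ Finset.range a, (if j < a then L - b - a + j else b + a - j) = (L - b - a) + j := by
      intro j hj; rw [Finset.mem_range] at hj
      rw [if_pos hj]
    rw [Finset.sum_congr rfl this, Finset.sum_add_distrib, Finset.sum_const, Finset.card_range,
      smul_eq_mul]
  have e4 : (∑ j ∈ Finset.range m', (if a + j < a then L - b - a + (a + j) else b + a - (a + j)))
      = m' * (b + 1 - m') + (∑ j ∈ Finset.range m', j) := by
    have : ∀ j ∈ Finset.range m', (if a + j < a then L - b - a + (a + j) else b + a - (a + j)) = b - j := by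
      intro j hj
      rw [if_neg (by omega)]
      omega
    rw [Finset.sum_congr rfl this]
    exact sum_rev_sub_const m' b (by omega)
  rw [e1, e2, e3, e4]
  -- reduce using gauss
  have g1 := gauss2 a
  have g2 := gauss2 m'
  -- goal: 2*((G a + a) + G m') + N*(L-N) ≤ 2*(a*(L-b-a) + G a + (m'*(b+1-m') + G m'))
  -- suffices: 2*a + N*(L-N) ≤ 2*a*(L-b-a) + 2*m'*(b+1-m')
  have key : 2 * a + (a + m') * (L - (a + m')) ≤ 2 * (a * (L - b - a)) + 2 * (m' * (b + 1 - m')) := by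
    obtain ⟨u, hu⟩ : ∃ u, u + b + a = L := ⟨L - b - a, by omega⟩
    obtain ⟨v, hv⟩ : ∃ v, v + m' = b + 1 := ⟨b + 1 - m', by omega⟩
    obtain ⟨w, hw⟩ : ∃ w, w + N = L := ⟨L - N, by omega⟩
    have r1 : L - b - a = u := by omega
    have r2 : b + 1 - m' = v := by omega
    have r3 : L - (a + m') = w := by omega
    rw [r1, r2, r3]
    rcases (by omega : N = 2 * a ∨ N = 2 * a + 1) with hpar | hpar <;>
      rcases (by omega : L = 2 * b ∨ L = 2 * b + 1) with lpar | lpar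
    · -- N even, L even: m' = a, v = u + 1, w = 2u
      have h1 : m' = a := by omega
      have h2 : v = u + 1 := by omega
      have h3 : w = 2 * u := by omega
      subst h1 h2 h3
      exact le_of_eq (by ring)
    · -- N even, L odd: m' = a, v = u, w = 2u - 1
      have h1 : m' = a := by omega
      obtain ⟨u', rfl⟩ : ∃ u', u = u' + 1 := ⟨u - 1, by omega⟩
      have h2 : v = u' + 1 := by omega
      have h3 : w = 2 * u' + 1 := by omega
      subst h1 h2 h3
      exact le_of_eq (by ring)
    · -- N odd, L even: m' = a + 1, v = u, w = 2u - 1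
      have h1 : m' = a + 1 := by omega
      obtain ⟨u', rfl⟩ : ∃ u', u = u' + 1 := ⟨u - 1, by omega⟩
      have h2 : v = u' + 1 := by omega
      have h3 : w = 2 * u' + 1 := by omega
      subst h1 h2 h3
      have hh : (2 * a + (a + (a + 1)) * (2 * u' + 1)) + 1
          = 2 * (a * (u' + 1)) + 2 * ((a + 1) * (u' + 1)) := by ring
      exact Nat.le_of_succ_le (le_of_eq hh)
    · -- N odd, L odd: m' = a + 1, u = v + 1, w = 2v
      have h1 : m' = a + 1 := by omega
      have h2 : u = v + 1 := by omega
      have h3 : w = 2 * v := by omega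
      subst h1 h2 h3
      exact le_of_eq (by ring)
  omega

end Sums

end Paper
namespace Paper

section Final
variable {L : ℕ}

lemma hgt_e1 [NeZero L] {N a j : ℕ} (hNL : N < L) (ha : a = N / 2) (hN : 0 < N)
    (hj : j < N) :
    hgt (((j : ℕ) : ZMod L) - ((a : ℕ) : ZMod L)) = if j < a then a - j else j - a := by
  have hvj : ((j : ℕ) : ZMod L).val = j := ZMod.val_cast_of_lt (by omega)
  have hva : ((a : ℕ) : ZMod L).val = a := ZMod.val_cast_of_lt (by omega)
  rw [hgt, val_sub', hvj, hva, Nat.min_def]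
  split_ifs <;> omega

lemma hgt_e2 [NeZero L] {N a b j : ℕ} (hNL : N < L) (ha : a = N / 2) (hb : b = L / 2)
    (hN : 0 < N) (hj : j < N) :
    hgt (((b : ℕ) : ZMod L) + ((a : ℕ) : ZMod L) - ((j : ℕ) : ZMod L))
      = if j < a then L - b - a + j else b + a - j := by
  have hba : ((b : ℕ) : ZMod L) + ((a : ℕ) : ZMod L) = (((b + a : ℕ)) : ZMod L) := by
    push_cast; ring
  have hvj : ((j : ℕ) : ZMod L).val = j := ZMod.val_cast_of_lt (by omega)
  have hvba : (((b + a : ℕ)) : ZMod L).val = b + a := ZMod.val_cast_of_lt (by omega)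
  rw [hba, hgt, val_sub', hvj, hvba, Nat.min_def]
  split_ifs <;> omega

theorem lifted_dist_ge_collapsed' (N : ℕ) (hL : 0 < L) (hNL : N ≤ L) :
    (∀ x y : Finset (ZMod L) × ZMod L,
      x.1.card = N → x.2 ∈ x.1 → y.1.card = N → y.2 ∈ y.1 →
      gdist (StepPer L N) x.1 y.1 ≤ gdist (LStep (L := L)) x y) ∧
    (N * (L - N) + 1) / 2 ≤ diamLifted L N := by
  haveI : NeZero L := ⟨by omega⟩
  constructor
  · intro x y hx hxm hy hym
    by_cases hL2 : 2 ≤ L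
    · have hconn : Rch x y := rch_all hL2 hxm hym (by rw [hx, hy])
      obtain ⟨n1, hn1⟩ := hconn
      have hSne : {n | Reaches (LStep (L := L)) x y n}.Nonempty := ⟨n1, hn1⟩
      have hmem : Reaches (LStep (L := L)) x y (gdist (LStep (L := L)) x y) :=
        Nat.sInf_mem hSne
      obtain ⟨m, hm, hreach⟩ := collapse _ x y hx hmem
      exact le_trans (Nat.sInf_le hreach) hm
    · have hL1 : L = 1 := by omega
      subst hL1
      have hxy : x.1 = y.1 := by
        ext z
        have h1 : z = x.2 := Subsingleton.elim _ _
        have h2 : z = y.2 := Subsingleton.elim _ _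
        constructor
        · intro _; rw [h2]; exact hym
        · intro _; rw [h1]; exact hxm
      have h0 : Reaches (StepPer 1 N) x.1 y.1 0 := by
        rw [hxy]; exact reaches_refl _ _
      exact le_trans (Nat.sInf_le h0) (Nat.zero_le _)
  · by_cases htriv : N * (L - N) = 0
    · rw [htriv]
      simp
    · have hN0 : 0 < N := by
        rcases Nat.eq_zero_or_pos N with h | h
        · exfalso; apply htriv; rw [h]; ring
        · exact h
      have hNL' : N < L := by
        rcases Nat.lt_or_ge N L with h | h
        · exact h
        · exfalso; apply htriv
          have : L - N = 0 := by omega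
          rw [this]; ring
      have hL2 : 2 ≤ L := by omega
      set a := N / 2 with ha
      set b := L / 2 with hb
      set smin : Finset (ZMod L) :=
        (Finset.range N).image (fun j => ((j : ℕ) : ZMod L) - ((a : ℕ) : ZMod L)) with hsmin
      set smax : Finset (ZMod L) :=
        (Finset.range N).image
          (fun j => ((b : ℕ) : ZMod L) + ((a : ℕ) : ZMod L) - ((j : ℕ) : ZMod L)) with hsmax
      have hinj1 : Set.InjOn (fun j : ℕ => ((j : ℕ) : ZMod L) - ((a : ℕ) : ZMod L))
          (Finset.range N) := by
        intro i hi i' hi' h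
        simp only [Finset.coe_range, Set.mem_Iio] at hi hi'
        have : ((i : ℕ) : ZMod L) = ((i' : ℕ) : ZMod L) := by
          have := sub_left_inj.mp h
          exact this
        have hv := congrArg ZMod.val this
        rwa [ZMod.val_cast_of_lt (by omega), ZMod.val_cast_of_lt (by omega)] at hv
      have hinj2 : Set.InjOn
          (fun j : ℕ => ((b : ℕ) : ZMod L) + ((a : ℕ) : ZMod L) - ((j : ℕ) : ZMod L))
          (Finset.range N) := by
        intro i hi i' hi' h
        simp only [Finset.coe_range, Set.mem_Iio] at hi hi'
        have : ((i : ℕ) : ZMod L) = ((i' : ℕ) : ZMod L) := by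
          have := sub_right_inj.mp h
          exact this
        have hv := congrArg ZMod.val this
        rwa [ZMod.val_cast_of_lt (by omega), ZMod.val_cast_of_lt (by omega)] at hv
      have hcard1 : smin.card = N := by
        rw [hsmin, Finset.card_image_of_injOn hinj1, Finset.card_range]
      have hcard2 : smax.card = N := by
        rw [hsmax, Finset.card_image_of_injOn hinj2, Finset.card_range]
      have haN : a < N := by omega
      have h0mem : (0 : ZMod L) ∈ smin := by
        rw [hsmin, Finset.mem_image]
        exact ⟨a, Finset.mem_range.mpr haN, by rw [sub_self]⟩
      have hbmem : ((b : ℕ) : ZMod L) ∈ smax := by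
        rw [hsmax, Finset.mem_image]
        exact ⟨a, Finset.mem_range.mpr haN, by rw [add_sub_cancel_right]⟩
      have hphi1 : phi smin = ∑ j ∈ Finset.range N, (if j < a then a - j else j - a) := by
        rw [hsmin, phi, Finset.sum_image hinj1]
        exact Finset.sum_congr rfl fun j hj =>
          hgt_e1 hNL' ha hN0 (Finset.mem_range.mp hj)
      have hphi2 : phi smax
          = ∑ j ∈ Finset.range N, (if j < a then L - b - a + j else b + a - j) := by
        rw [hsmax, phi, Finset.sum_image hinj2]
        exact Finset.sum_congr rfl fun j hj =>
          hgt_e2 hNL' ha hb hN0 (Finset.mem_range.mp hj)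
      have hkey : 2 * phi smin + N * (L - N) ≤ 2 * phi smax := by
        rw [hphi1, hphi2]
        exact key_sums hN0 hNL' ha hb rfl
      -- connectivity to get the distance realized
      have hconn : Rch ((smin, (0 : ZMod L)) : Finset (ZMod L) × ZMod L)
          (smax, ((b : ℕ) : ZMod L)) :=
        rch_all hL2 h0mem hbmem (by rw [hcard1, hcard2])
      obtain ⟨n1, hn1⟩ := hconn
      have hSne : {n | Reaches (LStep (L := L)) (smin, (0 : ZMod L))
          (smax, ((b : ℕ) : ZMod L)) n}.Nonempty := ⟨n1, hn1⟩
      set n₀ := gdist (LStep (L := L)) (smin, (0 : ZMod L)) (smax, ((b : ℕ) : ZMod L))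
        with hn₀
      have hmem : Reaches (LStep (L := L)) (smin, (0 : ZMod L))
          (smax, ((b : ℕ) : ZMod L)) n₀ := Nat.sInf_mem hSne
      have hphi := (phi_reaches n₀ _ _ hmem).1
      have hbound : (N * (L - N) + 1) / 2 ≤ n₀ := by
        simp only at hphi
        omega
      refine le_trans hbound ?_
      apply le_csSup
      · refine ⟨Fintype.card (Finset (ZMod L) × ZMod L), ?_⟩
        rintro n ⟨x, y, _, _, _, _, rfl⟩
        exact gdist_le_card _ _ _
      · exact ⟨(smin, (0 : ZMod L)), (smax, ((b : ℕ) : ZMod L)),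
          hcard1, h0mem, hcard2, hbmem, rfl⟩

end Final

/-- the lifted-TASEP distance dominates the periodic SSEP
distance of the collapsed configurations; hence the lifted-TASEP diameter is at
least `⌈N(L-N)/2⌉`. -/
theorem lifted_dist_ge_collapsed (N L : ℕ) (hL : 0 < L) (hNL : N ≤ L) :
    (∀ x y : Finset (ZMod L) × ZMod L,
      x.1.card = N → x.2 ∈ x.1 → y.1.card = N → y.2 ∈ y.1 →
      gdist (StepPer L N) x.1 y.1 ≤ gdist (LStep (L := L)) x y) ∧
    (N * (L - N) + 1) / 2 ≤ diamLifted L N :=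
  lifted_dist_ge_collapsed' N hL hNL

end Paper
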